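/- Let r be a natural number. Let 𝒮_∞^r denote the set of arrays a : ℕ × ℕ → ℝ such that for every N the matrix (a(i,j))_{i,j<N} is symmetric, positive semidefinite, and of rank at most r, and for a ∈ 𝒮_∞^r let 𝒦_a denote the set of sequences ξ : ℕ → ℝ^r with a(i,j) = ⟨ξ_i, ξ_j⟩ for all i, j. Then: (1) for every a ∈ 𝒮_∞^r, the set 𝒦_a is a nonempty compact subset of (ℝ^r)^ℕ with the product topology; (2) if a sequence (a_n) in 𝒮_∞^r converges pointwise to a (so a ∈ 𝒮_∞^r) and ξ^{(n)} ∈ 𝒦_{a_n} for each n, then the sequence (ξ^{(n)}) has a limit point in (ℝ^r)^ℕ that belongs to 𝒦_a. -/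

import Mathlib

open scoped RealInnerProductSpace
open Filter Topology

lemma gram_exists {N r : ℕ} (A : Matrix (Fin N) (Fin N) ℝ) (hA : A.PosSemidef)
    (hr : A.rank ≤ r) : ∃ v : Fin N → EuclideanSpace ℝ (Fin r), ∀ i j, A i j = ⟪v i, v j⟫ := by
  classical
  have hH := hA.1
  have hnn : ∀ k, 0 ≤ hH.eigenvalues k := hA.eigenvalues_nonneg
  set μ : Fin N → ℝ := hH.eigenvalues with hμ
  set U : Matrix (Fin N) (Fin N) ℝ := (Matrix.IsHermitian.eigenvectorUnitary hH : Matrix (Fin N) (Fin N) ℝ) with hU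
  have hentry : ∀ i j, A i j = ∑ k, U i k * μ k * U j k := by
    intro i j
    conv_lhs => rw [hH.spectral_theorem]
    simp [Matrix.mul_apply, Matrix.mul_diagonal, Matrix.star_apply, hU, hμ,
      Matrix.diagonal_apply, ite_mul, mul_ite]
  set w : Fin N → Fin N → ℝ := fun i k => Real.sqrt (μ k) * U i k with hwdef
  have hw2 : ∀ i j, A i j = ∑ k, w i k * w j k := by
    intro i j
    rw [hentry]
    refine Finset.sum_congr rfl fun k _ => ?_
    simp only [hwdef]
    rw [show Real.sqrt (μ k) * U i k * (Real.sqrt (μ k) * U j k)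
        = (Real.sqrt (μ k) * Real.sqrt (μ k)) * (U i k * U j k) by ring,
      Real.mul_self_sqrt (hnn k)]
    ring
  have hcard : Fintype.card {k // μ k ≠ 0} ≤ Fintype.card (Fin r) := by
    rw [Fintype.card_fin]
    exact le_trans (le_of_eq hH.rank_eq_card_non_zero_eigs.symm) hr
  obtain ⟨e⟩ : Nonempty ({k // μ k ≠ 0} ↪ Fin r) := Function.Embedding.nonempty_of_card_le hcard
  set v : Fin N → EuclideanSpace ℝ (Fin r) :=
    fun i => WithLp.toLp 2 (fun m => ∑ k : {k // μ k ≠ 0}, if e k = m then w i k.1 else 0) with hvdef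
  refine ⟨v, fun i j => ?_⟩
  rw [hw2]
  have hinner : (⟪v i, v j⟫ : ℝ) = ∑ m, v i m * v j m := by
    simp [PiLp.inner_apply, RCLike.inner_apply, mul_comm]
  rw [hinner]
  have key : ∀ m, v i m * v j m
      = ∑ k : {k // μ k ≠ 0}, if e k = m then w i k.1 * w j k.1 else 0 := by
    intro m
    by_cases hm : ∃ k : {k // μ k ≠ 0}, e k = m
    · obtain ⟨k0, rfl⟩ := hm
      simp [hvdef, EmbeddingLike.apply_eq_iff_eq]
    · push_neg at hm
      simp [hvdef, hm]
  rw [Finset.sum_congr rfl fun m _ => key m, Finset.sum_comm]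
  simp only [Finset.sum_ite_eq, Finset.mem_univ, if_true]
  have hzero : ∀ k ∈ Finset.univ, w i k * w j k ≠ 0 → (fun k => μ k ≠ 0) k := by
    intro k _ h
    intro h0
    apply h
    simp [hwdef, h0]
  rw [← Finset.sum_filter_of_ne hzero]
  exact Finset.sum_subtype _ (by simp) (fun k => w i k * w j k)

lemma gram_rank {N r : ℕ} (v : Fin N → EuclideanSpace ℝ (Fin r)) :
    (Matrix.of fun i j => (⟪v i, v j⟫ : ℝ)).PosSemidef ∧
    (Matrix.of fun i j => (⟪v i, v j⟫ : ℝ)).rank ≤ r := by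
  set B : Matrix (Fin r) (Fin N) ℝ := Matrix.of fun k i => v i k with hBdef
  have hB : (Matrix.of fun i j => (⟪v i, v j⟫ : ℝ)) = B.conjTranspose * B := by
    ext i j
    simp [hBdef, Matrix.mul_apply, Matrix.conjTranspose_apply, PiLp.inner_apply,
      RCLike.inner_apply, mul_comm]
  rw [hB]
  refine ⟨Matrix.posSemidef_conjTranspose_mul_self _, ?_⟩
  exact le_trans (Matrix.rank_mul_le_right _ _) (by simpa using Matrix.rank_le_card_height B)

lemma inner_coord_closed (r : ℕ) (i j : ℕ) (c : ℝ) :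
    IsClosed {ξ : ℕ → EuclideanSpace ℝ (Fin r) | c = ⟪ξ i, ξ j⟫} :=
  isClosed_eq continuous_const (Continuous.inner (continuous_apply i) (continuous_apply j))

lemma clusterPt_mem {α : Type*} [TopologicalSpace α] {F : Filter α} {x : α} {s : Set α}
    (h : ClusterPt x F) (hs : s ∈ F) (hc : IsClosed s) : x ∈ s := by
  have h2 : ClusterPt x (𝓟 s) := h.mono (Filter.le_principal_iff.mpr hs)
  rwa [← mem_closure_iff_clusterPt, hc.closure_eq] at h2

lemma norm_eq_sqrt_of_inner {r : ℕ} {x : EuclideanSpace ℝ (Fin r)} {c : ℝ}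
    (h : c = ⟪x, x⟫) : ‖x‖ = Real.sqrt c := by
  rw [h, real_inner_self_eq_norm_sq, Real.sqrt_sq (norm_nonneg x)]


/-- The set `𝒮_∞^r` of infinite real symmetric arrays all of whose finite corner matrices are
positive semidefinite of rank at most `r`. -/
def Sinf (r : ℕ) : Set (ℕ → ℕ → ℝ) :=
  {a | ∀ N : ℕ, (Matrix.of fun i j : Fin N => a i j).PosSemidef ∧
    (Matrix.of fun i j : Fin N => a i j).rank ≤ r}

/-- The set `𝒦_a` of Gram representations of `a` by sequences of vectors in `ℝ^r`. -/
def GramSet (r : ℕ) (a : ℕ → ℕ → ℝ) : Set (ℕ → EuclideanSpace ℝ (Fin r)) :=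
  {ξ | ∀ i j, a i j = ⟪ξ i, ξ j⟫}

/-- (1) For `a ∈ 𝒮_∞^r`, `𝒦_a` is nonempty and compact in the product topology;
(2) if `a_n ∈ 𝒮_∞^r` converge pointwise to `a` and `ξ^{(n)} ∈ 𝒦_{a_n}`, then `a ∈ 𝒮_∞^r` and
the sequence `(ξ^{(n)})` has a cluster point belonging to `𝒦_a`. -/
theorem stmt5 (r : ℕ) :
    (∀ a ∈ Sinf r, (GramSet r a).Nonempty ∧ IsCompact (GramSet r a)) ∧
    (∀ (a : ℕ → ℕ → ℝ) (as : ℕ → ℕ → ℕ → ℝ) (ξ : ℕ → ℕ → EuclideanSpace ℝ (Fin r)),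
      (∀ n, as n ∈ Sinf r) →
      (∀ i j, Tendsto (fun n => as n i j) atTop (𝓝 (a i j))) →
      (∀ n, ξ n ∈ GramSet r (as n)) →
      a ∈ Sinf r ∧ ∃ η ∈ GramSet r a, MapClusterPt η atTop ξ) := by
  have hGclosed : ∀ (a : ℕ → ℕ → ℝ), IsClosed (GramSet r a) := by
    intro a
    have : GramSet r a
        = ⋂ i, ⋂ j, {ξ : ℕ → EuclideanSpace ℝ (Fin r) | a i j = ⟪ξ i, ξ j⟫} := by
      ext ξ; simp [GramSet, Set.mem_iInter]
    rw [this]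
    exact isClosed_iInter fun i => isClosed_iInter fun j => inner_coord_closed r i j _
  constructor
  · intro a ha
    set K : Set (ℕ → EuclideanSpace ℝ (Fin r)) :=
      Set.univ.pi fun i => Metric.closedBall 0 (Real.sqrt (a i i)) with hKdef
    have hKc : IsCompact K := isCompact_univ_pi fun i => isCompact_closedBall _ _
    have hsub : GramSet r a ⊆ K := by
      intro ξ hξ i _
      rw [Metric.mem_closedBall, dist_zero_right, norm_eq_sqrt_of_inner (hξ i i)]
    constructor
    · -- nonemptiness
      choose v hv using fun N => gram_exists (Matrix.of fun i j : Fin N => a i j)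
        (ha N).1 (ha N).2
      set u : ℕ → ℕ → EuclideanSpace ℝ (Fin r) :=
        fun N i => if h : i < N then v N ⟨i, h⟩ else 0 with hudef
      have hu : ∀ N, u N ∈ K := by
        intro N i _
        rw [Metric.mem_closedBall, dist_zero_right]
        by_cases h : i < N
        · rw [hudef]
          simp only [h, dif_pos]
          rw [norm_eq_sqrt_of_inner (hv N ⟨i, h⟩ ⟨i, h⟩)]
          simp [Matrix.of_apply]
        · rw [hudef]
          simp only [h, dif_neg, not_false_iff]
          simp [Real.sqrt_nonneg]
      obtain ⟨η, -, hcl⟩ := hKc.exists_clusterPt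
        (f := Filter.map u atTop) (Filter.tendsto_principal.mpr (Eventually.of_forall hu))
      refine ⟨η, fun i j => ?_⟩
      have hmem : η ∈ {ξ : ℕ → EuclideanSpace ℝ (Fin r) | a i j = ⟪ξ i, ξ j⟫} := by
        refine clusterPt_mem hcl ?_ (inner_coord_closed r i j (a i j))
        rw [Filter.mem_map]
        filter_upwards [Filter.eventually_ge_atTop (max i j + 1)] with N hN
        have hi : i < N := lt_of_le_of_lt (le_max_left i j) hN
        have hj : j < N := lt_of_le_of_lt (le_max_right i j) hN
        have := hv N ⟨i, hi⟩ ⟨j, hj⟩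
        simpa [hudef, hi, hj] using this
      exact hmem
    · exact hKc.of_isClosed_subset (hGclosed a) hsub
  · intro a as ξ has hconv hξ
    have hbdd : ∀ i : ℕ, ∃ C : ℝ, ∀ n, as n i i ≤ C := fun i =>
      ⟨_, fun n => le_csSup (hconv i i).bddAbove_range ⟨n, rfl⟩⟩
    choose C hC using hbdd
    set K : Set (ℕ → EuclideanSpace ℝ (Fin r)) :=
      Set.univ.pi fun i => Metric.closedBall 0 (Real.sqrt (C i)) with hKdef
    have hKc : IsCompact K := isCompact_univ_pi fun i => isCompact_closedBall _ _
    have hu : ∀ n, ξ n ∈ K := by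
      intro n i _
      rw [Metric.mem_closedBall, dist_zero_right, norm_eq_sqrt_of_inner (hξ n i i)]
      exact Real.sqrt_le_sqrt (hC i n)
    obtain ⟨η, -, hcl⟩ := hKc.exists_clusterPt
      (f := Filter.map ξ atTop) (Filter.tendsto_principal.mpr (Eventually.of_forall hu))
    have hmcl : MapClusterPt η atTop ξ := hcl
    have hηG : η ∈ GramSet r a := by
      intro i j
      have hfc : ContinuousAt (fun ζ : ℕ → EuclideanSpace ℝ (Fin r) => (⟪ζ i, ζ j⟫ : ℝ)) η :=
        (Continuous.inner (continuous_apply i) (continuous_apply j)).continuousAt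
      have h2 := hmcl.continuousAt_comp hfc
      have h3 : ((fun ζ : ℕ → EuclideanSpace ℝ (Fin r) => (⟪ζ i, ζ j⟫ : ℝ)) ∘ ξ)
          = fun n => as n i j := funext fun n => (hξ n i j).symm
      rw [h3] at h2
      exact (eq_of_nhds_neBot (ClusterPt.mono h2 (hconv i j))).symm
    refine ⟨?_, η, hηG, hmcl⟩
    intro N
    have hAeq : (Matrix.of fun i j : Fin N => a i j)
        = Matrix.of fun i j : Fin N => (⟪η i, η j⟫ : ℝ) := by
      ext i j
      exact hηG i j
    rw [hAeq]
    exact gram_rank fun i : Fin N => η i
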